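/- Let (Ω, P) be a probability space, N_X, N_Y : Ω → ℤ measurable random variables, and U_X, U_Y : Ω → ℝ uniformly distributed on [0,1), such that the pair (N_X, N_Y), the variable U_X, and the variable U_Y are mutually independent. Let g : ℤ → ℝ and L : ℤ → ℝ with L(n) > 0 for all n and with the intervals I_n = [g(n), g(n) + L(n)) pairwise disjoint. Define X̃ = g(N_X) + L(N_X)·U_X and Ỹ = g(N_Y) + L(N_Y)·U_Y. Then the mutual information is unchanged by the continuation: klDiv( law(X̃, Ỹ), law(X̃) ⊗ law(Ỹ) ) = klDiv( law(N_X, N_Y), law(N_X) ⊗ law(N_Y) ). -/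

import Mathlib

open MeasureTheory Set Classical

/-- The Kullback–Leibler divergence `klDiv μ ν = ∫ log (dμ/dν) dμ` when `μ ≪ ν` (and the
log-likelihood ratio is integrable), and `+∞` otherwise. -/
noncomputable def klDiv {α : Type*} [MeasurableSpace α] (μ ν : Measure α) : EReal :=
  if μ ≪ ν ∧ Integrable (llr μ ν) μ then ((∫ x, llr μ ν x ∂μ : ℝ) : EReal) else ⊤

section aux

noncomputable def nidx (g L : ℤ → ℝ) (x : ℝ) : ℤ :=
  if h : ∃ k, x ∈ Ico (g k) (g k + L k) then h.choose else 0

lemma nidx_eq {g L : ℤ → ℝ}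
    (hdisj : ∀ n m : ℤ, n ≠ m →
      Disjoint (Ico (g n) (g n + L n)) (Ico (g m) (g m + L m)))
    {n : ℤ} {x : ℝ} (hx : x ∈ Ico (g n) (g n + L n)) : nidx g L x = n := by
  have h : ∃ k, x ∈ Ico (g k) (g k + L k) := ⟨n, hx⟩
  rw [nidx, dif_pos h]
  by_contra hne
  exact Set.disjoint_left.mp (hdisj _ _ hne) h.choose_spec hx

lemma measurable_nidx (g L : ℤ → ℝ)
    (hdisj : ∀ n m : ℤ, n ≠ m →
      Disjoint (Ico (g n) (g n + L n)) (Ico (g m) (g m + L m))) :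
    Measurable (nidx g L) := by
  apply measurable_to_countable'
  intro k
  have hset : nidx g L ⁻¹' {k} =
      Ico (g k) (g k + L k) ∪
        ((⋃ j, Ico (g j) (g j + L j))ᶜ ∩ {x : ℝ | k = 0}) := by
    ext x
    simp only [mem_preimage, mem_singleton_iff, mem_union, mem_inter_iff, mem_compl_iff,
      mem_iUnion, mem_setOf_eq]
    constructor
    · intro hk
      by_cases h : ∃ j, x ∈ Ico (g j) (g j + L j)
      · left
        have := h.choose_spec
        rwa [show h.choose = k by rw [← hk, nidx, dif_pos h]] at this
      · right
        refine ⟨h, ?_⟩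
        rw [← hk, nidx, dif_neg h]
    · rintro (hx | ⟨hnx, hk⟩)
      · exact nidx_eq hdisj hx
      · rw [nidx, dif_neg hnx, hk]
  rw [hset]
  exact (measurableSet_Ico.union
    (((MeasurableSet.iUnion fun j => measurableSet_Ico).compl).inter
      (MeasurableSet.const _)))

noncomputable def uinv (g L : ℤ → ℝ) (x : ℝ) : ℝ :=
  (x - g (nidx g L x)) / L (nidx g L x)

lemma measurable_uinv (g L : ℤ → ℝ)
    (hdisj : ∀ n m : ℤ, n ≠ m →
      Disjoint (Ico (g n) (g n + L n)) (Ico (g m) (g m + L m))) :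
    Measurable (uinv g L) := by
  have hn := measurable_nidx g L hdisj
  exact (measurable_id.sub (measurable_from_top.comp hn)).div
    (measurable_from_top.comp hn)

lemma noise_leftInv {g L : ℤ → ℝ} (hL : ∀ n : ℤ, 0 < L n)
    (hdisj : ∀ n m : ℤ, n ≠ m →
      Disjoint (Ico (g n) (g n + L n)) (Ico (g m) (g m + L m)))
    {n : ℤ} {u : ℝ} (hu : u ∈ Ico (0:ℝ) 1) :
    nidx g L (g n + L n * u) = n ∧ uinv g L (g n + L n * u) = u := by
  have hmem : g n + L n * u ∈ Ico (g n) (g n + L n) := by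
    constructor
    · nlinarith [hL n, hu.1]
    · nlinarith [hL n, hu.2]
  have h1 := nidx_eq hdisj hmem
  refine ⟨h1, ?_⟩
  rw [uinv, h1]
  rw [add_sub_cancel_left]
  exact mul_div_cancel_left₀ u (hL n).ne'

/-- The middle-interchange for product measures. -/
lemma map_prodProdProdComm {α β γ δ : Type*} [MeasurableSpace α] [MeasurableSpace β]
    [MeasurableSpace γ] [MeasurableSpace δ]
    (a : Measure α) (b : Measure β) (c : Measure γ) (d : Measure δ)
    [SFinite a] [SFinite b] [SFinite c] [SFinite d] :
    ((a.prod b).prod (c.prod d)).map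
        (fun q : (α × β) × (γ × δ) => ((q.1.1, q.2.1), (q.1.2, q.2.2)))
      = (a.prod c).prod (b.prod d) := by
  have h1 := measurePreserving_prodAssoc a b (c.prod d)
  have h2 := ((measurePreserving_prodAssoc b c d).symm MeasurableEquiv.prodAssoc)
  have h3 := (MeasureTheory.Measure.measurePreserving_swap (μ := b) (ν := c)).prod
    (MeasurePreserving.id d)
  have h4 := measurePreserving_prodAssoc c b d
  have hinner := (h4.comp h3).comp h2
  have h5 := (MeasurePreserving.id a).prod hinner
  have h6 := ((measurePreserving_prodAssoc a c (b.prod d)).symm MeasurableEquiv.prodAssoc)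
  have htot := (h6.comp h5).comp h1
  have := htot.map_eq
  rw [← this]
  rfl

end aux


lemma klDiv_map_of_ae_leftInv {α β : Type*} [MeasurableSpace α] [MeasurableSpace β]
    (μ ν : Measure α) [IsFiniteMeasure μ] [IsFiniteMeasure ν]
    {f : α → β} {r : β → α} (hf : Measurable f) (hr : Measurable r)
    (hμid : r ∘ f =ᵐ[μ] id) (hνid : r ∘ f =ᵐ[ν] id) :
    klDiv (μ.map f) (ν.map f) = klDiv μ ν := by
  have hmapμ : (μ.map f).map r = μ := by
    rw [Measure.map_map hr hf, Measure.map_congr hμid, Measure.map_id]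
  have hmapν : (ν.map f).map r = ν := by
    rw [Measure.map_map hr hf, Measure.map_congr hνid, Measure.map_id]
  have hac_iff : μ.map f ≪ ν.map f ↔ μ ≪ ν := by
    constructor
    · intro h
      have := h.map hr
      rwa [hmapμ, hmapν] at this
    · intro h
      exact h.map hf
  by_cases hac : μ ≪ ν
  · have hmeas_h : Measurable (μ.rnDeriv ν) := Measure.measurable_rnDeriv μ ν
    have hac' : μ.map f ≪ ν.map f := hac.map hf
    have key : μ.map f = (ν.map f).withDensity (μ.rnDeriv ν ∘ r) := by
      have h1 : μ = ν.withDensity ((μ.rnDeriv ν ∘ r) ∘ f) := by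
        conv_lhs => rw [← Measure.withDensity_rnDeriv_eq μ ν hac]
        refine withDensity_congr_ae ?_
        filter_upwards [hνid] with x hx
        simp only [Function.comp_apply]
        rw [show r (f x) = x from hx]
      conv_lhs => rw [h1]
      ext s hs
      rw [Measure.map_apply hf hs, withDensity_apply _ hs,
        withDensity_apply _ (hf hs), setLIntegral_map hs (hmeas_h.comp hr) hf]
      rfl
    have hrd : (μ.map f).rnDeriv (ν.map f) =ᵐ[ν.map f] μ.rnDeriv ν ∘ r := by
      rw [key]
      exact Measure.rnDeriv_withDensity _ (hmeas_h.comp hr)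
    have hllr0 : llr (μ.map f) (ν.map f) =ᵐ[ν.map f]
        fun y => Real.log (μ.rnDeriv ν (r y)).toReal := by
      filter_upwards [hrd] with y hy
      rw [llr, hy]; rfl
    have hllr : llr (μ.map f) (ν.map f) ∘ f =ᵐ[μ] llr μ ν := by
      have h2 : llr (μ.map f) (ν.map f) ∘ f =ᵐ[μ]
          (fun y => Real.log (μ.rnDeriv ν (r y)).toReal) ∘ f :=
        ae_eq_comp' hf.aemeasurable hllr0 hac'
      refine h2.trans ?_
      filter_upwards [hμid] with x hx
      simp only [Function.comp_apply]
      rw [show r (f x) = x from hx, llr]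
    have hint_iff : Integrable (llr (μ.map f) (ν.map f)) (μ.map f) ↔ Integrable (llr μ ν) μ := by
      rw [integrable_map_measure (measurable_llr _ _).aestronglyMeasurable hf.aemeasurable]
      exact integrable_congr hllr
    have hint_eq : ∫ x, llr (μ.map f) (ν.map f) x ∂(μ.map f) = ∫ x, llr μ ν x ∂μ := by
      rw [integral_map hf.aemeasurable (measurable_llr _ _).aestronglyMeasurable]
      exact integral_congr_ae hllr
    simp only [klDiv]
    by_cases hi : Integrable (llr μ ν) μ
    · rw [if_pos ⟨hac', hint_iff.mpr hi⟩, if_pos ⟨hac, hi⟩, hint_eq]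
    · rw [if_neg (fun hcon => hi (hint_iff.mp hcon.2)), if_neg (fun hcon => hi hcon.2)]
  · simp only [klDiv]
    rw [if_neg (fun hcon => hac (hac_iff.mp hcon.1)), if_neg (fun hcon => hac hcon.1)]

lemma klDiv_prod_right {α β : Type*} [MeasurableSpace α] [MeasurableSpace β]
    (μ ν : Measure α) [IsFiniteMeasure μ] [IsFiniteMeasure ν]
    (κ : Measure β) [IsProbabilityMeasure κ] :
    klDiv (μ.prod κ) (ν.prod κ) = klDiv μ ν := by
  have hac_iff : μ.prod κ ≪ ν.prod κ ↔ μ ≪ ν := by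
    constructor
    · intro h
      refine Measure.AbsolutelyContinuous.mk fun s hs hs0 => ?_
      have h1 : (ν.prod κ) (s ×ˢ univ) = 0 := by
        rw [Measure.prod_prod, hs0, zero_mul]
      have h2 := h h1
      rw [Measure.prod_prod, measure_univ, mul_one] at h2
      exact h2
    · intro h
      exact h.prod Measure.AbsolutelyContinuous.rfl
  by_cases hac : μ ≪ ν
  · have hmeas_h : Measurable (μ.rnDeriv ν) := Measure.measurable_rnDeriv μ ν
    have hac' : μ.prod κ ≪ ν.prod κ := hac.prod Measure.AbsolutelyContinuous.rfl
    have key : μ.prod κ = (ν.prod κ).withDensity (μ.rnDeriv ν ∘ Prod.fst) := by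
      refine Measure.prod_eq (μ := μ) (ν := κ)
        (μν := (ν.prod κ).withDensity (μ.rnDeriv ν ∘ Prod.fst)) fun s t hs ht => ?_
      rw [withDensity_apply _ (hs.prod ht), ← Measure.prod_restrict,
        lintegral_prod _ ((hmeas_h.comp measurable_fst).aemeasurable)]
      simp only [Function.comp_apply, lintegral_const, Measure.restrict_apply_univ]
      rw [lintegral_mul_const _ hmeas_h, Measure.setLIntegral_rnDeriv hac]
    have hrd : (μ.prod κ).rnDeriv (ν.prod κ) =ᵐ[ν.prod κ] μ.rnDeriv ν ∘ Prod.fst := by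
      rw [key]
      exact Measure.rnDeriv_withDensity _ (hmeas_h.comp measurable_fst)
    have hllr : llr (μ.prod κ) (ν.prod κ) =ᵐ[μ.prod κ] llr μ ν ∘ Prod.fst := by
      filter_upwards [hac'.ae_le hrd] with p hp
      rw [llr, hp]; rfl
    have hfst : (μ.prod κ).map Prod.fst = μ := by
      rw [Measure.map_fst_prod, measure_univ, one_smul]
    have hcomp_int := integrable_map_measure (μ := μ.prod κ) (g := llr μ ν) (f := Prod.fst)
      (measurable_llr μ ν).aestronglyMeasurable measurable_fst.aemeasurable
    rw [hfst] at hcomp_int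
    have hint_iff : Integrable (llr (μ.prod κ) (ν.prod κ)) (μ.prod κ) ↔ Integrable (llr μ ν) μ := by
      rw [integrable_congr hllr]; exact hcomp_int.symm
    have hint := integral_map (μ := μ.prod κ) (f := llr μ ν) (φ := Prod.fst)
      measurable_fst.aemeasurable (measurable_llr μ ν).aestronglyMeasurable
    rw [hfst] at hint
    have hint_eq : ∫ x, llr (μ.prod κ) (ν.prod κ) x ∂(μ.prod κ) = ∫ x, llr μ ν x ∂μ := by
      rw [integral_congr_ae hllr, hint]; simp only [Function.comp_apply]
    simp only [klDiv]
    by_cases hi : Integrable (llr μ ν) μ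
    · rw [if_pos ⟨hac', hint_iff.mpr hi⟩, if_pos ⟨hac, hi⟩, hint_eq]
    · rw [if_neg (fun hcon => hi (hint_iff.mp hcon.2)), if_neg (fun hcon => hi hcon.2)]
  · simp only [klDiv]
    rw [if_neg (fun hcon => hac (hac_iff.mp hcon.1)), if_neg (fun hcon => hac hcon.1)]


/-- **Continuation by noise preserves mutual information.**
Let `(N_X, N_Y)` be a pair of integer random variables and `U_X, U_Y` uniform on
`[0,1)`, with `(N_X, N_Y)`, `U_X`, `U_Y` mutually independent (expressed as the
factorization of the joint law into the product of the three laws). Let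
`I_n = [g(n), g(n)+L(n))` be pairwise disjoint intervals with `L(n) > 0`, and set
`X̃ = g(N_X)+L(N_X)U_X`, `Ỹ = g(N_Y)+L(N_Y)U_Y`. Then the mutual information (the KL
divergence of the joint law from the product of the marginals) is unchanged:
`klDiv(law(X̃,Ỹ), law(X̃) ⊗ law(Ỹ)) = klDiv(law(N_X,N_Y), law(N_X) ⊗ law(N_Y))`. -/
theorem continuation_by_noise_mutualInformation
    {Ω : Type*} [MeasurableSpace Ω] (P : Measure Ω) [IsProbabilityMeasure P]
    (NX NY : Ω → ℤ) (hNX : Measurable NX) (hNY : Measurable NY)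
    (UX UY : Ω → ℝ) (hUX : Measurable UX) (hUY : Measurable UY)
    (hUXunif : P.map UX = volume.restrict (Ico (0 : ℝ) 1))
    (hUYunif : P.map UY = volume.restrict (Ico (0 : ℝ) 1))
    (hindep : P.map (fun ω => ((NX ω, NY ω), UX ω, UY ω))
      = (P.map (fun ω => (NX ω, NY ω))).prod ((P.map UX).prod (P.map UY)))
    (g L : ℤ → ℝ) (hL : ∀ n : ℤ, 0 < L n)
    (hdisj : ∀ n m : ℤ, n ≠ m →
      Disjoint (Ico (g n) (g n + L n)) (Ico (g m) (g m + L m))) :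
    klDiv
        (P.map (fun ω => (g (NX ω) + L (NX ω) * UX ω, g (NY ω) + L (NY ω) * UY ω)))
        ((P.map (fun ω => g (NX ω) + L (NX ω) * UX ω)).prod
          (P.map (fun ω => g (NY ω) + L (NY ω) * UY ω)))
      = klDiv (P.map (fun ω => (NX ω, NY ω))) ((P.map NX).prod (P.map NY)) := by
  have hg : Measurable g := measurable_from_top
  have hLmeas : Measurable L := measurable_from_top
  set T : ℤ × ℝ → ℝ := fun p => g p.1 + L p.1 * p.2 with hTdef
  have hT : Measurable T :=
    ((hg.comp measurable_fst).add ((hLmeas.comp measurable_fst).mul measurable_snd))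
  set F : (ℤ × ℤ) × (ℝ × ℝ) → ℝ × ℝ :=
    fun q => (g q.1.1 + L q.1.1 * q.2.1, g q.1.2 + L q.1.2 * q.2.2) with hFdef
  have hF : Measurable F := by
    refine Measurable.prod ?_ ?_
    · exact ((hg.comp (measurable_fst.comp measurable_fst)).add
        ((hLmeas.comp (measurable_fst.comp measurable_fst)).mul
          (measurable_fst.comp measurable_snd)))
    · exact ((hg.comp (measurable_snd.comp measurable_fst)).add
        ((hLmeas.comp (measurable_snd.comp measurable_fst)).mul
          (measurable_snd.comp measurable_snd)))
  have hpack : Measurable (fun ω => ((NX ω, NY ω), (UX ω, UY ω))) :=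
    ((hNX.prodMk hNY).prodMk (hUX.prodMk hUY))
  -- probability instances
  haveI hκX : IsProbabilityMeasure (P.map UX) := by
    constructor
    rw [hUXunif, Measure.restrict_apply_univ, Real.volume_Ico]
    norm_num
  haveI hκY : IsProbabilityMeasure (P.map UY) := by
    constructor
    rw [hUYunif, Measure.restrict_apply_univ, Real.volume_Ico]
    norm_num
  haveI : IsProbabilityMeasure (P.map (fun ω => (NX ω, NY ω))) :=
    Measure.isProbabilityMeasure_map (hNX.prodMk hNY).aemeasurable
  haveI : IsProbabilityMeasure (P.map NX) := Measure.isProbabilityMeasure_map hNX.aemeasurable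
  haveI : IsProbabilityMeasure (P.map NY) := Measure.isProbabilityMeasure_map hNY.aemeasurable
  -- joint law
  have hJoint : P.map (fun ω => (g (NX ω) + L (NX ω) * UX ω, g (NY ω) + L (NY ω) * UY ω))
      = ((P.map (fun ω => (NX ω, NY ω))).prod ((P.map UX).prod (P.map UY))).map F := by
    rw [← hindep, Measure.map_map hF hpack]
    rfl
  -- marginal laws
  have hNXUX : P.map (fun ω => (NX ω, UX ω)) = (P.map NX).prod (P.map UX) := by
    have e1 : Measurable (fun q : (ℤ × ℤ) × (ℝ × ℝ) => (q.1.1, q.2.1)) :=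
      (measurable_fst.comp measurable_fst).prodMk (measurable_fst.comp measurable_snd)
    have step1 : P.map (fun ω => (NX ω, UX ω))
        = (P.map (fun ω => ((NX ω, NY ω), (UX ω, UY ω)))).map
            (fun q : (ℤ × ℤ) × (ℝ × ℝ) => (q.1.1, q.2.1)) := by
      rw [Measure.map_map e1 hpack]
      rfl
    rw [step1, hindep,
      show (fun q : (ℤ × ℤ) × (ℝ × ℝ) => (q.1.1, q.2.1))
        = Prod.map (Prod.fst : ℤ × ℤ → ℤ) (Prod.fst : ℝ × ℝ → ℝ) from rfl,
      ← Measure.map_prod_map _ _ measurable_fst measurable_fst,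
      Measure.map_map measurable_fst (hNX.prodMk hNY), Measure.map_fst_prod,
      measure_univ, one_smul]
    rfl
  have hNYUY : P.map (fun ω => (NY ω, UY ω)) = (P.map NY).prod (P.map UY) := by
    have e1 : Measurable (fun q : (ℤ × ℤ) × (ℝ × ℝ) => (q.1.2, q.2.2)) :=
      (measurable_snd.comp measurable_fst).prodMk (measurable_snd.comp measurable_snd)
    have step1 : P.map (fun ω => (NY ω, UY ω))
        = (P.map (fun ω => ((NX ω, NY ω), (UX ω, UY ω)))).map
            (fun q : (ℤ × ℤ) × (ℝ × ℝ) => (q.1.2, q.2.2)) := by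
      rw [Measure.map_map e1 hpack]
      rfl
    rw [step1, hindep,
      show (fun q : (ℤ × ℤ) × (ℝ × ℝ) => (q.1.2, q.2.2))
        = Prod.map (Prod.snd : ℤ × ℤ → ℤ) (Prod.snd : ℝ × ℝ → ℝ) from rfl,
      ← Measure.map_prod_map _ _ measurable_snd measurable_snd,
      Measure.map_map measurable_snd (hNX.prodMk hNY), Measure.map_snd_prod,
      measure_univ, one_smul]
    rfl
  have hXmarg : P.map (fun ω => g (NX ω) + L (NX ω) * UX ω)
      = ((P.map NX).prod (P.map UX)).map T := by
    rw [← hNXUX, Measure.map_map hT (hNX.prodMk hUX)]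
    rfl
  have hYmarg : P.map (fun ω => g (NY ω) + L (NY ω) * UY ω)
      = ((P.map NY).prod (P.map UY)).map T := by
    rw [← hNYUY, Measure.map_map hT (hNY.prodMk hUY)]
    rfl
  set e : (ℤ × ℤ) × (ℝ × ℝ) → (ℤ × ℝ) × (ℤ × ℝ) :=
    fun q => ((q.1.1, q.2.1), (q.1.2, q.2.2)) with hedef
  have he : Measurable e :=
    (((measurable_fst.comp measurable_fst).prodMk (measurable_fst.comp measurable_snd)).prodMk
      ((measurable_snd.comp measurable_fst).prodMk (measurable_snd.comp measurable_snd)))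
  have hProdMarg :
      (P.map (fun ω => g (NX ω) + L (NX ω) * UX ω)).prod
          (P.map (fun ω => g (NY ω) + L (NY ω) * UY ω))
        = (((P.map NX).prod (P.map NY)).prod ((P.map UX).prod (P.map UY))).map F := by
    rw [hXmarg, hYmarg, Measure.map_prod_map _ _ hT hT,
      ← map_prodProdProdComm (P.map NX) (P.map NY) (P.map UX) (P.map UY),
      Measure.map_map (hT.prodMap hT) he]
    rfl
  -- the a.e. left inverse
  set R : ℝ × ℝ → (ℤ × ℤ) × (ℝ × ℝ) :=
    fun p => ((nidx g L p.1, nidx g L p.2), (uinv g L p.1, uinv g L p.2)) with hRdef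
  have hR : Measurable R :=
    (((measurable_nidx g L hdisj).comp measurable_fst).prodMk
        ((measurable_nidx g L hdisj).comp measurable_snd)).prodMk
      (((measurable_uinv g L hdisj).comp measurable_fst).prodMk
        ((measurable_uinv g L hdisj).comp measurable_snd))
  have hgood : ∀ q : (ℤ × ℤ) × (ℝ × ℝ), q.2.1 ∈ Ico (0:ℝ) 1 → q.2.2 ∈ Ico (0:ℝ) 1 →
      (R ∘ F) q = q := by
    rintro ⟨⟨n, m⟩, u, v⟩ hu hv
    obtain ⟨h1, h2⟩ := noise_leftInv (g := g) hL hdisj (n := n) hu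
    obtain ⟨h3, h4⟩ := noise_leftInv (g := g) hL hdisj (n := m) hv
    simp only [Function.comp_apply, hFdef, hRdef] at *
    rw [h1, h2, h3, h4]
  have hIcoProb : (P.map UX).prod (P.map UY) ((Ico (0:ℝ) 1 ×ˢ Ico (0:ℝ) 1)ᶜ) = 0 := by
    have hm : MeasurableSet (Ico (0:ℝ) 1 ×ˢ Ico (0:ℝ) 1) :=
      measurableSet_Ico.prod measurableSet_Ico
    have h1 : (P.map UX) (Ico (0:ℝ) 1) = 1 := by
      rw [hUXunif, Measure.restrict_apply measurableSet_Ico, inter_self, Real.volume_Ico]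
      norm_num
    have h2 : (P.map UY) (Ico (0:ℝ) 1) = 1 := by
      rw [hUYunif, Measure.restrict_apply measurableSet_Ico, inter_self, Real.volume_Ico]
      norm_num
    rw [measure_compl hm (measure_ne_top _ _), Measure.prod_prod, h1, h2, mul_one,
      measure_univ, tsub_self]
  have hbad : ∀ ρ : Measure (ℤ × ℤ), IsProbabilityMeasure ρ →
      (ρ.prod ((P.map UX).prod (P.map UY)))
        {q : (ℤ × ℤ) × (ℝ × ℝ) | ¬(q.2.1 ∈ Ico (0:ℝ) 1 ∧ q.2.2 ∈ Ico (0:ℝ) 1)} = 0 := by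
    intro ρ hρ
    have hset : {q : (ℤ × ℤ) × (ℝ × ℝ) | ¬(q.2.1 ∈ Ico (0:ℝ) 1 ∧ q.2.2 ∈ Ico (0:ℝ) 1)}
        = (univ : Set (ℤ × ℤ)) ×ˢ ((Ico (0:ℝ) 1 ×ˢ Ico (0:ℝ) 1)ᶜ) := by
      ext q
      simp [Set.mem_prod]
    rw [hset, Measure.prod_prod, hIcoProb, mul_zero]
  have hid : ∀ ρ : Measure (ℤ × ℤ), IsProbabilityMeasure ρ →
      R ∘ F =ᵐ[ρ.prod ((P.map UX).prod (P.map UY))] id := by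
    intro ρ hρ
    rw [Filter.EventuallyEq, ae_iff]
    refine measure_mono_null (fun q hq => ?_) (hbad ρ hρ)
    simp only [mem_setOf_eq, id_eq] at hq ⊢
    intro hcon
    exact hq (hgood q hcon.1 hcon.2)
  rw [hJoint, hProdMarg,
    klDiv_map_of_ae_leftInv _ _ hF hR (hid _ inferInstance) (hid _ inferInstance),
    klDiv_prod_right]
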